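/- Let p be a positive integer and let f ∈ L_p[0,1] be the fixed point of the similarity operator G with parameters satisfying r_s = ∑_{k=1}^n a_k|d_k|^s < 1 for all s = 1,...,p. Then ‖f‖_{L_p[0,1]} ≤ (∑_{s=1}^p ‖{c,β}‖_{s,a}) / (∏_{s=1}^p (1 - r_s))^{1/p}, where ‖{c,β}‖_{s,a} = (∑_{k=1}^n (|c_k|+|β_k|)^s a_k)^{1/s}. -/

import Mathlib

open MeasureTheory Set Finset

lemma amgm_helper (s j : ℕ) (hj : j < s) (u dd M : ℝ) (hu : 0 ≤ u) (hdd : 0 ≤ dd) (hM : 0 < M) :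
    u ^ (s - j) * dd ^ j ≤ M ^ (((s - j : ℕ) : ℝ) / s)
      * (((s - j : ℕ) : ℝ) / s * (u ^ s / M) + (j : ℝ) / s * dd ^ s) := by
  have hs0 : (0:ℝ) < s := by
    exact_mod_cast Nat.pos_of_ne_zero (by omega)
  have hw : ((s - j : ℕ) : ℝ) / s + (j : ℝ) / s = 1 := by
    rw [← add_div, ← Nat.cast_add, Nat.sub_add_cancel hj.le]
    exact div_self hs0.ne'
  have key := Real.geom_mean_le_arith_mean2_weighted
    (by positivity : (0:ℝ) ≤ ((s - j : ℕ) : ℝ) / s) (by positivity : (0:ℝ) ≤ (j : ℝ) / s)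
    (by positivity : (0:ℝ) ≤ u ^ s / M) (by positivity : (0:ℝ) ≤ dd ^ s) hw
  have e1 : (u ^ s / M) ^ (((s - j : ℕ) : ℝ) / s) = u ^ (s - j) / M ^ (((s - j : ℕ) : ℝ) / s) := by
    rw [Real.div_rpow (by positivity) hM.le]
    congr 1
    rw [← Real.rpow_natCast u s, ← Real.rpow_mul hu, ← Real.rpow_natCast u (s - j)]
    congr 1
    field_simp
  have e2 : (dd ^ s) ^ ((j : ℝ) / s) = dd ^ j := by
    rw [← Real.rpow_natCast dd s, ← Real.rpow_mul hdd, ← Real.rpow_natCast dd j]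
    congr 1
    field_simp
  rw [e1, e2] at key
  have hMw : 0 < M ^ (((s - j : ℕ) : ℝ) / s) := Real.rpow_pos_of_pos hM _
  calc u ^ (s - j) * dd ^ j
      = M ^ (((s - j : ℕ) : ℝ) / s) * (u ^ (s - j) / M ^ (((s - j : ℕ) : ℝ) / s) * dd ^ j) := by
        field_simp
    _ ≤ _ := mul_le_mul_of_nonneg_left key hMw.le

lemma msum_le (n s j : ℕ) (hj : j < s) (a u d : ℕ → ℝ) (ha : ∀ k < n, 0 < a k)
    (hu : ∀ k, 0 ≤ u k) (hrs : ∑ k ∈ Finset.range n, a k * |d k| ^ s ≤ 1) :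
    ∑ k ∈ Finset.range n, a k * (u k ^ (s - j) * |d k| ^ j)
      ≤ ((∑ k ∈ Finset.range n, u k ^ s * a k) ^ ((1:ℝ)/s)) ^ (s - j) := by
  have hs0 : (0:ℝ) < s := by exact_mod_cast Nat.pos_of_ne_zero (by omega)
  set M := ∑ k ∈ Finset.range n, u k ^ s * a k with hMdef
  have hM0 : 0 ≤ M :=
    Finset.sum_nonneg fun k hk => mul_nonneg (pow_nonneg (hu k) s)
      (ha k (Finset.mem_range.1 hk)).le
  have hpow : (M ^ ((1:ℝ)/s)) ^ (s - j) = M ^ (((s - j : ℕ) : ℝ) / s) := by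
    rw [← Real.rpow_natCast (M ^ ((1:ℝ)/s)) (s - j), ← Real.rpow_mul hM0]
    congr 1
    field_simp
  rcases eq_or_lt_of_le hM0 with hM | hM
  · have hz := (Finset.sum_eq_zero_iff_of_nonneg
      (fun k hk => mul_nonneg (pow_nonneg (hu k) s) (ha k (Finset.mem_range.1 hk)).le)).1 hM.symm
    have hL : ∑ k ∈ Finset.range n, a k * (u k ^ (s - j) * |d k| ^ j) = 0 := by
      refine Finset.sum_eq_zero fun k hk => ?_
      have huk : u k = 0 := by
        have h2 := hz k hk
        have hak := (ha k (Finset.mem_range.1 hk)).ne'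
        have h3 : u k ^ s = 0 := by
          rcases mul_eq_zero.1 h2 with h | h
          · exact h
          · exact absurd h hak
        exact pow_eq_zero_iff (by omega : s ≠ 0) |>.1 h3
      rw [huk, zero_pow (by omega : s - j ≠ 0)]
      ring
    rw [hL]
    positivity
  · set w1 : ℝ := ((s - j : ℕ) : ℝ) / s with hw1
    set w2 : ℝ := (j : ℝ) / s with hw2
    have hw : w1 + w2 = 1 := by
      rw [hw1, hw2, ← add_div, ← Nat.cast_add, Nat.sub_add_cancel hj.le]
      exact div_self hs0.ne'
    set Mw : ℝ := M ^ w1 with hMw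
    have hMwpos : 0 < Mw := Real.rpow_pos_of_pos hM _
    have hw10 : 0 ≤ w1 := by positivity
    have hw20 : 0 ≤ w2 := by positivity
    calc ∑ k ∈ Finset.range n, a k * (u k ^ (s - j) * |d k| ^ j)
        ≤ ∑ k ∈ Finset.range n, a k * (Mw * (w1 * (u k ^ s / M) + w2 * |d k| ^ s)) := by
          refine Finset.sum_le_sum fun k hk => ?_
          exact mul_le_mul_of_nonneg_left
            (amgm_helper s j hj (u k) (|d k|) M (hu k) (abs_nonneg _) hM)
            (ha k (Finset.mem_range.1 hk)).le
      _ = ∑ k ∈ Finset.range n, (Mw * w1 / M) * (u k ^ s * a k)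
            + ∑ k ∈ Finset.range n, (Mw * w2) * (a k * |d k| ^ s) := by
          rw [← Finset.sum_add_distrib]
          exact Finset.sum_congr rfl fun k _ => by ring
      _ = Mw * w1 / M * M + Mw * w2 * (∑ k ∈ Finset.range n, a k * |d k| ^ s) := by
          rw [← Finset.mul_sum, ← Finset.mul_sum, ← hMdef]
      _ = Mw * (w1 + w2 * (∑ k ∈ Finset.range n, a k * |d k| ^ s)) := by
          field_simp
      _ ≤ Mw * (w1 + w2 * 1) := by
          refine mul_le_mul_of_nonneg_left ?_ hMwpos.le
          have h2 : w2 * (∑ k ∈ Finset.range n, a k * |d k| ^ s) ≤ w2 * 1 :=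
            mul_le_mul_of_nonneg_left hrs hw20
          linarith
      _ = Mw := by rw [mul_one, hw, mul_one]
      _ = (M ^ ((1:ℝ)/s)) ^ (s - j) := by rw [hMw, hpow]

lemma main_induction (p : ℕ) (I N R : ℕ → ℝ)
    (hI0 : I 0 ≤ 1) (hInn : ∀ j, 0 ≤ I j) (hN0 : ∀ t, 0 ≤ N t) (hR0 : ∀ t, 0 ≤ R t)
    (hR1 : ∀ t, 1 ≤ t → t ≤ p → R t < 1)
    (hrec : ∀ s, 1 ≤ s → s ≤ p →
      I s ≤ (∑ j ∈ Finset.range s, (s.choose j : ℝ) * N s ^ (s - j) * I j) + R s * I s) :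
    ∀ s, s ≤ p → 1 ≤ s →
      I s ≤ (∑ t ∈ Finset.Icc 1 s, N t) ^ s / ∏ t ∈ Finset.Icc 1 s, (1 - R t) := by
  have e : ∀ m : ℕ, Finset.Icc 1 m = Finset.Ioc 0 m := fun m => by
    ext x; simp [Finset.mem_Icc, Finset.mem_Ioc]; omega
  have hPpos : ∀ s ≤ p, 0 < ∏ t ∈ Finset.Icc 1 s, (1 - R t) := by
    intro s hsp
    refine Finset.prod_pos fun t ht => ?_
    have h1 := (Finset.mem_Icc.1 ht).1
    have h2 := (Finset.mem_Icc.1 ht).2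
    have := hR1 t h1 (h2.trans hsp)
    linarith
  have hPanti : ∀ j s', j ≤ s' → s' ≤ p →
      (∏ t ∈ Finset.Icc 1 s', (1 - R t)) ≤ ∏ t ∈ Finset.Icc 1 j, (1 - R t) := by
    intro j s' hjs hs'p
    rw [e, e, ← Finset.prod_Ioc_consecutive _ (Nat.zero_le j) hjs]
    refine mul_le_of_le_one_right (Finset.prod_nonneg fun t ht => ?_)
      (Finset.prod_le_one (fun t ht => ?_) (fun t ht => ?_))
    · have h1 := (Finset.mem_Ioc.1 ht).1
      have h2 := (Finset.mem_Ioc.1 ht).2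
      have := hR1 t h1 (by omega)
      linarith
    · have h1 := (Finset.mem_Ioc.1 ht).1
      have h2 := (Finset.mem_Ioc.1 ht).2
      have := hR1 t (by omega) (by omega)
      linarith
    · have := hR0 t
      linarith
  intro s
  induction s using Nat.strong_induction_on with
  | _ s ih =>
  intro hsp hs1
  obtain ⟨m, rfl⟩ : ∃ m, s = m + 1 := ⟨s - 1, by omega⟩
  set T := ∑ t ∈ Finset.Icc 1 m, N t with hT
  set P := ∏ t ∈ Finset.Icc 1 m, (1 - R t) with hP
  have hTle : 0 ≤ T := Finset.sum_nonneg fun t _ => hN0 t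
  have hPp : 0 < P := hPpos m (by omega)
  have hPle1 : P ≤ 1 := Finset.prod_le_one
    (fun t ht => by
      have := hR1 t (Finset.mem_Icc.1 ht).1 (by have := (Finset.mem_Icc.1 ht).2; omega)
      linarith)
    (fun t ht => by have := hR0 t; linarith)
  have hIj : ∀ j, j < m + 1 → I j ≤ T ^ j / P := by
    intro j hj
    rcases Nat.eq_zero_or_pos j with rfl | hj1
    · rw [pow_zero]
      calc I 0 ≤ 1 := hI0
        _ ≤ 1 / P := by rw [le_div_iff₀ hPp]; linarith
    · refine (ih j hj (by omega) hj1).trans ?_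
      refine div_le_div₀ (pow_nonneg hTle j) ?_ hPp ?_
      · exact pow_le_pow_left₀ (Finset.sum_nonneg fun t _ => hN0 t)
          (Finset.sum_le_sum_of_subset_of_nonneg
            (Finset.Icc_subset_Icc_right (by omega)) fun t _ _ => hN0 t) j
      · exact hPanti j m (by omega) (by omega)
  have h1 := hrec (m+1) (by omega) hsp
  have hR' := hR1 (m+1) (by omega) hsp
  have h2 : (1 - R (m+1)) * I (m+1)
      ≤ ∑ j ∈ Finset.range (m+1), ((m+1).choose j : ℝ) * N (m+1) ^ (m+1-j) * I j := by
    nlinarith [h1]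
  have h3 : ∑ j ∈ Finset.range (m+1), ((m+1).choose j : ℝ) * N (m+1) ^ (m+1-j) * I j
      ≤ ∑ j ∈ Finset.range (m+1), ((m+1).choose j : ℝ) * N (m+1) ^ (m+1-j) * (T ^ j / P) := by
    refine Finset.sum_le_sum fun j hj => ?_
    have hNn := hN0 (m+1)
    refine mul_le_mul_of_nonneg_left (hIj j (Finset.mem_range.1 hj)) ?_
    positivity
  have h4 : ∑ j ∈ Finset.range (m+1), ((m+1).choose j : ℝ) * N (m+1) ^ (m+1-j) * (T ^ j / P)
      ≤ (T + N (m+1)) ^ (m+1) / P := by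
    rw [add_pow, Finset.sum_div]
    refine le_trans (le_of_eq (Finset.sum_congr rfl fun j hj => by ring))
      (Finset.sum_le_sum_of_subset_of_nonneg (Finset.range_subset_range.2 (by omega))
        fun j _ _ => ?_)
    have hNn := hN0 (m+1)
    positivity
  have hTs : (∑ t ∈ Finset.Icc 1 (m+1), N t) = T + N (m+1) :=
    Finset.sum_Icc_succ_top (by omega) N
  have hPs : (∏ t ∈ Finset.Icc 1 (m+1), (1 - R t)) = P * (1 - R (m+1)) :=
    Finset.prod_Icc_succ_top (by omega) _
  rw [hTs, hPs]
  have h5 : (1 - R (m+1)) * I (m+1) ≤ (T + N (m+1)) ^ (m+1) / P :=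
    le_trans h2 (le_trans h3 h4)
  rw [le_div_iff₀ (mul_pos hPp (by linarith : (0:ℝ) < 1 - R (m+1)))]
  calc I (m+1) * (P * (1 - R (m+1))) = ((1 - R (m+1)) * I (m+1)) * P := by ring
    _ ≤ ((T + N (m+1)) ^ (m+1) / P) * P := mul_le_mul_of_nonneg_right h5 hPp.le
    _ = (T + N (m+1)) ^ (m+1) := div_mul_cancel₀ _ hPp.ne'

/-- Bound on the `L_p` norm (`p` a positive integer) of a self-similar function
through the self-similarity parameters:
`‖f‖_p ≤ (∑_{s=1}^p ‖{c,β}‖_{s,a}) / (∏_{s=1}^p (1 - r_s))^{1/p}`. -/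
theorem stmt_5 (n : ℕ) (hn : 1 < n) (a c d β : ℕ → ℝ)
    (ha : ∀ k < n, 0 < a k) (hsum : ∑ k ∈ Finset.range n, a k = 1)
    (p : ℕ) (hp : 0 < p)
    (α : ℕ → ℝ) (hα0 : α 0 = 0) (hα : ∀ k, α (k + 1) = α k + a k)
    (hr : ∀ s ∈ Finset.Icc 1 p, ∑ k ∈ Finset.range n, a k * |d k| ^ (s : ℕ) < 1)
    (f : ℝ → ℝ) (hmeas : Measurable f)
    (hf : IntegrableOn (fun t => |f t| ^ (p : ℕ)) (Set.Ioo 0 1))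
    (hfix : ∀ k < n, ∀ᵐ x ∂(volume.restrict (Set.Ioo (α k) (α (k + 1)))),
      f x = β k + c k * ((x - α k) / a k) + d k * f ((x - α k) / a k)) :
    (∫ x in Set.Ioo (0:ℝ) 1, |f x| ^ (p : ℕ)) ^ ((1 : ℝ) / p)
      ≤ (∑ s ∈ Finset.Icc 1 p,
            (∑ k ∈ Finset.range n, (|c k| + |β k|) ^ (s : ℕ) * a k) ^ ((1 : ℝ) / s))
        / (∏ s ∈ Finset.Icc 1 p,
            (1 - ∑ k ∈ Finset.range n, a k * |d k| ^ (s : ℕ))) ^ ((1 : ℝ) / p) := by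
  -- α facts
  have hαsum : ∀ k, α k = ∑ i ∈ Finset.range k, a i := by
    intro k; induction k with
    | zero => simpa using hα0
    | succ k ih => rw [hα, ih, Finset.sum_range_succ]
  have hαn : α n = 1 := by rw [hαsum, hsum]
  have hα0le : ∀ k ≤ n, 0 ≤ α k := by
    intro k hk; rw [hαsum]
    exact Finset.sum_nonneg fun i hi => (ha i (lt_of_lt_of_le (Finset.mem_range.1 hi) hk)).le
  have hαle1 : ∀ k ≤ n, α k ≤ 1 := by
    intro k hk; rw [hαsum, ← hsum]
    exact Finset.sum_le_sum_of_subset_of_nonneg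
      (Finset.range_subset_range.2 hk) (fun i hi _ => (ha i (Finset.mem_range.1 hi)).le)
  have hαlt : ∀ k < n, α k < α (k + 1) := fun k hk => by
    rw [hα]; linarith [ha k hk]
  -- integrability
  have hint : ∀ j ≤ p, IntegrableOn (fun t => |f t| ^ j) (Set.Ioo (0:ℝ) 1) := by
    intro j hj
    have hco : IntegrableOn (fun _ : ℝ => (1:ℝ)) (Set.Ioo (0:ℝ) 1) :=
      integrableOn_const measure_Ioo_lt_top.ne
    refine Integrable.mono' (hco.add hf) ((hmeas.abs.pow_const j).aestronglyMeasurable) ?_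
    refine Filter.Eventually.of_forall fun t => ?_
    rw [Real.norm_eq_abs, abs_of_nonneg (pow_nonneg (abs_nonneg _) _)]
    simp only [Pi.add_apply]
    rcases le_or_gt (|f t|) 1 with h | h
    · have h1 : |f t| ^ j ≤ 1 := pow_le_one₀ (abs_nonneg (f t)) h
      nlinarith [pow_nonneg (abs_nonneg (f t)) p]
    · have h1 := pow_le_pow_right₀ h.le hj
      linarith
  -- I 0 = 1
  have hI0 : (∫ x in Set.Ioo (0:ℝ) 1, |f x| ^ (0:ℕ)) = 1 := by
    simp [Real.volume_Ioo]
  have hdecomp : ∀ s ≤ p, (∫ x in Set.Ioo (0:ℝ) 1, |f x| ^ s)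
      = ∑ k ∈ Finset.range n, a k * ∫ t in Set.Ioo (0:ℝ) 1, |β k + c k * t + d k * f t| ^ s := by
    intro s hs
    have hii : ∀ k < n, IntervalIntegrable (fun x => |f x| ^ s) volume (α k) (α (k+1)) := by
      intro k hk
      rw [intervalIntegrable_iff_integrableOn_Ioc_of_le (hαlt k hk).le]
      exact ((integrableOn_Ioc_iff_integrableOn_Ioo enorm_ne_top).2 (hint s hs)).mono_set
        (Set.Ioc_subset_Ioc (hα0le k hk.le) (hαle1 (k+1) hk))
    have h1 : (∫ x in Set.Ioo (0:ℝ) 1, |f x| ^ s)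
        = ∑ k ∈ Finset.range n, ∫ x in Set.Ioo (α k) (α (k+1)), |f x| ^ s := by
      rw [← MeasureTheory.integral_Ioc_eq_integral_Ioo,
          ← intervalIntegral.integral_of_le (by norm_num : (0:ℝ) ≤ 1)]
      rw [← hα0, ← hαn, ← intervalIntegral.sum_integral_adjacent_intervals hii]
      refine Finset.sum_congr rfl fun k hk => ?_
      rw [intervalIntegral.integral_of_le (hαlt k (Finset.mem_range.1 hk)).le,
          MeasureTheory.integral_Ioc_eq_integral_Ioo]
    rw [h1]
    refine Finset.sum_congr rfl fun k hk => ?_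
    have hk := Finset.mem_range.1 hk
    have h2 : (∫ x in Set.Ioo (α k) (α (k+1)), |f x| ^ s)
        = ∫ x in Set.Ioo (α k) (α (k+1)), |β k + c k * ((x - α k)/ a k) + d k * f ((x - α k)/ a k)| ^ s :=
      integral_congr_ae ((hfix k hk).mono fun x hx => by dsimp only; rw [hx])
    rw [h2]
    have hak := ha k hk
    have h3 : (∫ x in Set.Ioo (α k) (α (k+1)), |β k + c k * ((x - α k)/ a k) + d k * f ((x - α k)/ a k)| ^ s)
        = ∫ x in (α k)..(α (k+1)), (fun y => |β k + c k * (y / a k) + d k * f (y / a k)| ^ s) (x - α k) := by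
      rw [intervalIntegral.integral_of_le (hαlt k hk).le, MeasureTheory.integral_Ioc_eq_integral_Ioo]
    rw [h3, intervalIntegral.integral_comp_sub_right
      (fun y => |β k + c k * (y / a k) + d k * f (y / a k)| ^ s) (α k), hα k]
    simp only [sub_self, add_sub_cancel_left]
    rw [show (fun y => |β k + c k * (y / a k) + d k * f (y / a k)| ^ s)
        = fun y => (fun t => |β k + c k * t + d k * f t| ^ s) (y / a k) from rfl,
      intervalIntegral.integral_comp_div (fun t => |β k + c k * t + d k * f t| ^ s)
        (ne_of_gt hak), zero_div, div_self (ne_of_gt hak)]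
    rw [smul_eq_mul, intervalIntegral.integral_of_le (by norm_num : (0:ℝ) ≤ 1),
        MeasureTheory.integral_Ioc_eq_integral_Ioo]
  have hbound : ∀ s ≤ p, ∀ k < n,
      (∫ t in Set.Ioo (0:ℝ) 1, |β k + c k * t + d k * f t| ^ s)
        ≤ ∑ j ∈ Finset.range (s+1), (s.choose j : ℝ) * ((|c k| + |β k|) ^ (s-j) * |d k| ^ j)
            * (∫ x in Set.Ioo (0:ℝ) 1, |f x| ^ j) := by
    intro s hs k hk
    set u := |c k| + |β k| with hudef
    have hterm : ∀ j, j ∈ Finset.range (s+1) →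
        Integrable (fun t => (s.choose j : ℝ) * (u ^ (s-j) * |d k| ^ j) * |f t| ^ j)
          (volume.restrict (Set.Ioo (0:ℝ) 1)) := by
      intro j hj
      exact ((hint j (le_trans (Nat.lt_succ_iff.1 (Finset.mem_range.1 hj)) hs)).const_mul _)
    have hgeq : ∀ t : ℝ, (u + |d k| * |f t|) ^ s
        = ∑ j ∈ Finset.range (s+1), (s.choose j : ℝ) * (u ^ (s-j) * |d k| ^ j) * |f t| ^ j := by
      intro t
      rw [add_comm, add_pow]
      refine Finset.sum_congr rfl fun j hj => ?_
      rw [mul_pow]; push_cast; ring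
    have hgint : Integrable (fun t => (u + |d k| * |f t|) ^ s)
        (volume.restrict (Set.Ioo (0:ℝ) 1)) := by
      rw [show (fun t => (u + |d k| * |f t|) ^ s)
          = fun t => ∑ j ∈ Finset.range (s+1),
              (s.choose j : ℝ) * (u ^ (s-j) * |d k| ^ j) * |f t| ^ j from funext hgeq]
      exact integrable_finset_sum _ hterm
    have hle : (∫ t in Set.Ioo (0:ℝ) 1, |β k + c k * t + d k * f t| ^ s)
        ≤ ∫ t in Set.Ioo (0:ℝ) 1, (u + |d k| * |f t|) ^ s := by
      refine integral_mono_of_nonneg (Filter.Eventually.of_forall fun t => by positivity) hgint ?_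
      filter_upwards [self_mem_ae_restrict measurableSet_Ioo] with t ht
      have ht1 : |t| ≤ 1 := by
        rw [abs_of_pos ht.1]; exact ht.2.le
      have habs : |β k + c k * t + d k * f t| ≤ u + |d k| * |f t| := by
        refine (abs_add_three _ _ _).trans ?_
        rw [abs_mul, abs_mul, hudef]
        nlinarith [abs_nonneg (c k), abs_nonneg (f t), abs_nonneg t, abs_nonneg (d k)]
      exact pow_le_pow_left₀ (abs_nonneg _) habs s
    refine hle.trans (le_of_eq ?_)
    rw [show (fun t => (u + |d k| * |f t|) ^ s)
        = fun t => ∑ j ∈ Finset.range (s+1),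
            (s.choose j : ℝ) * (u ^ (s-j) * |d k| ^ j) * |f t| ^ j from funext hgeq]
    rw [integral_finset_sum _ hterm]
    exact Finset.sum_congr rfl fun j hj => integral_const_mul _ _
  have hrec : ∀ s ≤ p, (∫ x in Set.Ioo (0:ℝ) 1, |f x| ^ s)
      ≤ ∑ j ∈ Finset.range (s+1), (s.choose j : ℝ)
          * (∑ k ∈ Finset.range n, a k * ((|c k| + |β k|) ^ (s-j) * |d k| ^ j))
          * (∫ x in Set.Ioo (0:ℝ) 1, |f x| ^ j) := by
    intro s hs
    rw [hdecomp s hs]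
    calc ∑ k ∈ Finset.range n, a k * ∫ t in Set.Ioo (0:ℝ) 1, |β k + c k * t + d k * f t| ^ s
        ≤ ∑ k ∈ Finset.range n, a k * ∑ j ∈ Finset.range (s+1), (s.choose j : ℝ)
            * ((|c k| + |β k|) ^ (s-j) * |d k| ^ j) * (∫ x in Set.Ioo (0:ℝ) 1, |f x| ^ j) := by
          refine Finset.sum_le_sum fun k hk => ?_
          exact mul_le_mul_of_nonneg_left (hbound s hs k (Finset.mem_range.1 hk))
            (ha k (Finset.mem_range.1 hk)).le
      _ = _ := by
          simp only [Finset.mul_sum]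
          rw [Finset.sum_comm]
          refine Finset.sum_congr rfl fun j hj => ?_
          rw [Finset.sum_mul]
          exact Finset.sum_congr rfl fun k _ => by ring
  -- abstract recursion form
  have hrec' : ∀ s, 1 ≤ s → s ≤ p →
      (∫ x in Set.Ioo (0:ℝ) 1, |f x| ^ s)
        ≤ (∑ j ∈ Finset.range s, (s.choose j : ℝ)
              * ((∑ k ∈ Finset.range n, (|c k| + |β k|) ^ s * a k) ^ ((1:ℝ)/s)) ^ (s - j)
              * (∫ x in Set.Ioo (0:ℝ) 1, |f x| ^ j))
          + (∑ k ∈ Finset.range n, a k * |d k| ^ s) * (∫ x in Set.Ioo (0:ℝ) 1, |f x| ^ s) := by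
    intro s hs1 hsp
    refine (hrec s hsp).trans ?_
    rw [Finset.sum_range_succ]
    have hlast : ((s.choose s : ℕ) : ℝ)
        * (∑ k ∈ Finset.range n, a k * ((|c k| + |β k|) ^ (s - s) * |d k| ^ s))
        * (∫ x in Set.Ioo (0:ℝ) 1, |f x| ^ s)
        = (∑ k ∈ Finset.range n, a k * |d k| ^ s) * (∫ x in Set.Ioo (0:ℝ) 1, |f x| ^ s) := by
      simp [Nat.choose_self, Nat.sub_self]
    rw [hlast]
    refine add_le_add (Finset.sum_le_sum fun j hj => ?_) le_rfl
    have hj' : j < s := Finset.mem_range.1 hj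
    have hIn : 0 ≤ ∫ x in Set.Ioo (0:ℝ) 1, |f x| ^ j :=
      integral_nonneg fun x => by positivity
    refine mul_le_mul_of_nonneg_right (mul_le_mul_of_nonneg_left ?_ (by positivity)) hIn
    exact msum_le n s j hj' a (fun k => |c k| + |β k|) d ha (fun k => by positivity)
      (hr s (Finset.mem_Icc.2 ⟨hs1, hsp⟩)).le
  -- apply the induction
  have hkey := main_induction p (fun s => ∫ x in Set.Ioo (0:ℝ) 1, |f x| ^ s)
    (fun t => (∑ k ∈ Finset.range n, (|c k| + |β k|) ^ t * a k) ^ ((1:ℝ)/t))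
    (fun t => ∑ k ∈ Finset.range n, a k * |d k| ^ t)
    (le_of_eq hI0)
    (fun j => integral_nonneg fun x => by positivity)
    (fun t => Real.rpow_nonneg (Finset.sum_nonneg fun k hk =>
      mul_nonneg (by positivity) (ha k (Finset.mem_range.1 hk)).le) _)
    (fun t => Finset.sum_nonneg fun k hk =>
      mul_nonneg (ha k (Finset.mem_range.1 hk)).le (by positivity))
    (fun t h1 h2 => hr t (Finset.mem_Icc.2 ⟨h1, h2⟩))
    (fun s hs1 hsp => hrec' s hs1 hsp)
    p le_rfl hp
  -- conclude via rpow
  have hTle : 0 ≤ ∑ t ∈ Finset.Icc 1 p,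
      (∑ k ∈ Finset.range n, (|c k| + |β k|) ^ t * a k) ^ ((1:ℝ)/t) :=
    Finset.sum_nonneg fun t _ => Real.rpow_nonneg (Finset.sum_nonneg fun k hk =>
      mul_nonneg (by positivity) (ha k (Finset.mem_range.1 hk)).le) _
  have hPp : 0 < ∏ t ∈ Finset.Icc 1 p, (1 - ∑ k ∈ Finset.range n, a k * |d k| ^ t) := by
    refine Finset.prod_pos fun t ht => ?_
    have := hr t ht
    linarith
  have hpne : ((p : ℕ) : ℝ) ≠ 0 := Nat.cast_ne_zero.2 hp.ne'
  have h := Real.rpow_le_rpow (integral_nonneg fun x => by positivity) hkey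
    (by positivity : (0:ℝ) ≤ 1 / p)
  rw [Real.div_rpow (pow_nonneg hTle p) hPp.le, ← Real.rpow_natCast
      (∑ t ∈ Finset.Icc 1 p,
        (∑ k ∈ Finset.range n, (|c k| + |β k|) ^ t * a k) ^ ((1:ℝ)/t)) p,
    ← Real.rpow_mul hTle, mul_one_div, div_self hpne, Real.rpow_one] at h
  exact h
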